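/- Let (R_1^{(t)},…,R_M^{(t)}) be the iterates of Algorithm 1 (max-density mean alignment): R_i^{(t)} = U_i V_iᵀ where U_i S_i V_iᵀ is the SVD of H_i^{(t)} = Σ_j w_{ij} k_{ij}^{(t−1)} R_j^{(t−1)} μ_j μ_iᵀ + η R_i^{(t−1)}, with w_{ij} = exp(−γ(‖μ_i‖²+‖μ_j‖²)) and k_{ij}^{(t−1)} = exp(2γ⟨R_i^{(t−1)}μ_i, R_j^{(t−1)}μ_j⟩). Then for every t ≥ 1 and any η > 0, L(R_1^{(t)},…,R_M^{(t)}) ≥ L(R_1^{(t−1)},…,R_M^{(t−1)}) + 2γη Σ_{i=1}^M ‖R_i^{(t)} − R_i^{(t−1)}‖_F², where L(R_1,…,R_M) = Σ_{i,j} exp(−γ‖R_i μ_i − R_j μ_j‖²). -/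
import Mathlib


open Matrix
open scoped BigOperators

noncomputable section

/-- Squared Euclidean norm of a vector. -/
def sqnorm {d : ℕ} (v : Fin d → ℝ) : ℝ := ∑ k, v k ^ 2

/-- Squared Frobenius norm of a matrix. -/
def frobSq {d : ℕ} (A : Matrix (Fin d) (Fin d) ℝ) : ℝ := ∑ a, ∑ b, (A a b) ^ 2

/-- The weights `w_{ij} = exp(−γ(‖μ_i‖²+‖μ_j‖²))` of Algorithm 1. -/
def wCoef {M d : ℕ} (γ : ℝ) (μ : Fin M → (Fin d → ℝ)) (i j : Fin M) : ℝ :=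
  Real.exp (-γ * (sqnorm (μ i) + sqnorm (μ j)))

/-- The coefficients `k_{ij} = exp(2γ⟨R_i μ_i, R_j μ_j⟩)` of Algorithm 1. -/
def kCoef {M d : ℕ} (γ : ℝ) (μ : Fin M → (Fin d → ℝ))
    (R : Fin M → Matrix (Fin d) (Fin d) ℝ) (i j : Fin M) : ℝ :=
  Real.exp (2 * γ * (((R i).mulVec (μ i)) ⬝ᵥ ((R j).mulVec (μ j))))

/-- The matrices `H_i = Σ_j w_{ij} k_{ij} R_j μ_j μ_iᵀ + η R_i` of Algorithm 1. -/
def Hmat {M d : ℕ} (γ η : ℝ) (μ : Fin M → (Fin d → ℝ))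
    (R : Fin M → Matrix (Fin d) (Fin d) ℝ) (i : Fin M) :
    Matrix (Fin d) (Fin d) ℝ :=
  (∑ j, (wCoef γ μ i j * kCoef γ μ R i j) •
      Matrix.vecMulVec ((R j).mulVec (μ j)) (μ i)) + η • R i

/-- The density objective `L(R_1,…,R_M) = Σ_{i,j} exp(−γ‖R_i μ_i − R_j μ_j‖²)`. -/
def Lobj {M d : ℕ} (γ : ℝ) (μ : Fin M → (Fin d → ℝ))
    (R : Fin M → Matrix (Fin d) (Fin d) ℝ) : ℝ :=
  ∑ i, ∑ j, Real.exp (-γ * sqnorm ((R i).mulVec (μ i) - (R j).mulVec (μ j)))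

end

noncomputable section

namespace Alg1
variable {d : ℕ}

def ip (A B : Matrix (Fin d) (Fin d) ℝ) : ℝ := ∑ a, ∑ b, A a b * B a b

lemma ip_eq_trace (A B : Matrix (Fin d) (Fin d) ℝ) : ip A B = Matrix.trace (Aᵀ * B) := by
  simp [ip, Matrix.trace, Matrix.diag, Matrix.mul_apply, Matrix.transpose_apply]
  rw [Finset.sum_comm]

lemma dot_eq (v w : Fin d → ℝ) : v ⬝ᵥ w = ∑ k, v k * w k := rfl

lemma sqnorm_eq_dot (v : Fin d → ℝ) : (∑ k, v k ^ 2) = v ⬝ᵥ v := by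
  simp [dot_eq, sq]

lemma mulVec_dot_mulVec (R : Matrix (Fin d) (Fin d) ℝ) (h : Rᵀ * R = 1) (v w : Fin d → ℝ) :
    (R *ᵥ v) ⬝ᵥ (R *ᵥ w) = v ⬝ᵥ w := by
  rw [Matrix.dotProduct_mulVec, ← Matrix.mulVec_transpose, Matrix.mulVec_mulVec, h,
    Matrix.one_mulVec]

end Alg1
namespace Alg1

lemma ip_smul (c : ℝ) (A B : Matrix (Fin d) (Fin d) ℝ) : ip A (c • B) = c * ip A B := by
  simp [ip, Finset.mul_sum]; ring_nf
  exact Finset.sum_congr rfl fun a _ => Finset.sum_congr rfl fun b _ => by ring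

lemma ip_add (A B C : Matrix (Fin d) (Fin d) ℝ) : ip A (B + C) = ip A B + ip A C := by
  simp [ip, mul_add, Finset.sum_add_distrib]

lemma ip_sum {ι : Type*} (t : Finset ι) (A : Matrix (Fin d) (Fin d) ℝ)
    (f : ι → Matrix (Fin d) (Fin d) ℝ) : ip A (∑ j ∈ t, f j) = ∑ j ∈ t, ip A (f j) := by
  simp only [ip, Matrix.sum_apply, Finset.mul_sum]
  calc ∑ a, ∑ b, ∑ j ∈ t, A a b * f j a b
      = ∑ a, ∑ j ∈ t, ∑ b, A a b * f j a b :=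
        Finset.sum_congr rfl fun a _ => Finset.sum_comm
    _ = ∑ j ∈ t, ∑ a, ∑ b, A a b * f j a b := Finset.sum_comm

lemma ip_vecMulVec (Q : Matrix (Fin d) (Fin d) ℝ) (g v : Fin d → ℝ) :
    ip Q (Matrix.vecMulVec g v) = (Q *ᵥ v) ⬝ᵥ g := by
  simp [ip, Matrix.vecMulVec_apply, dot_eq, Matrix.mulVec, Finset.sum_mul]
  exact Finset.sum_congr rfl fun a _ => Finset.sum_congr rfl fun b _ => by ring

lemma ip_self_orth (R : Matrix (Fin d) (Fin d) ℝ) (h : Rᵀ * R = 1) : ip R R = (d : ℝ) := by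
  rw [ip_eq_trace, h]
  simp

lemma frobSq_eq (A B : Matrix (Fin d) (Fin d) ℝ) :
    (∑ a, ∑ b, (A a b - B a b) ^ 2) = ip A A - 2 * ip A B + ip B B := by
  simp only [ip, ← Finset.sum_sub_distrib, ← Finset.sum_add_distrib, Finset.mul_sum]
  exact Finset.sum_congr rfl fun a _ => Finset.sum_congr rfl fun b _ => by ring

end Alg1
namespace Alg1

lemma ip_svd_opt (U V : Matrix (Fin d) (Fin d) ℝ) (s : Fin d → ℝ)
    (hU : Uᵀ * U = 1) (hV : Vᵀ * V = 1) :
    ip (U * Vᵀ) (U * Matrix.diagonal s * Vᵀ) = ∑ k, s k := by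
  rw [ip_eq_trace]
  have : (U * Vᵀ)ᵀ * (U * Matrix.diagonal s * Vᵀ) = V * (Uᵀ * U) * Matrix.diagonal s * Vᵀ := by
    simp [Matrix.transpose_mul, Matrix.mul_assoc]
  rw [this, hU, Matrix.mul_one, Matrix.trace_mul_cycle, hV, Matrix.one_mul,
    Matrix.trace_diagonal]

lemma diag_le_one (A : Matrix (Fin d) (Fin d) ℝ) (h : Aᵀ * A = 1) (k : Fin d) : A k k ≤ 1 := by
  have h1 : (Aᵀ * A) k k = 1 := by rw [h]; simp
  have h2 : ∑ l, A l k * A l k = 1 := by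
    simpa [Matrix.mul_apply, Matrix.transpose_apply] using h1
  have h3 : A k k * A k k ≤ 1 := by
    rw [← h2]
    exact Finset.single_le_sum (fun l _ => mul_self_nonneg (A l k)) (Finset.mem_univ k)
  nlinarith

lemma ip_svd_le (Q U V : Matrix (Fin d) (Fin d) ℝ) (s : Fin d → ℝ)
    (hQ : Qᵀ * Q = 1) (hU : Uᵀ * U = 1) (hV : Vᵀ * V = 1) (hs : ∀ k, 0 ≤ s k) :
    ip Q (U * Matrix.diagonal s * Vᵀ) ≤ ∑ k, s k := by
  rw [ip_eq_trace]
  have : Qᵀ * (U * Matrix.diagonal s * Vᵀ) = Qᵀ * U * Matrix.diagonal s * Vᵀ := by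
    simp [Matrix.mul_assoc]
  rw [this, Matrix.trace_mul_cycle]
  have htr : Matrix.trace (Vᵀ * (Qᵀ * U) * Matrix.diagonal s) =
      ∑ k, (Vᵀ * (Qᵀ * U)) k k * s k := by
    simp [Matrix.trace, Matrix.diag, Matrix.mul_diagonal]
  rw [← Matrix.mul_assoc] at htr ⊢
  rw [htr]
  have hA : (Vᵀ * Qᵀ * U)ᵀ * (Vᵀ * Qᵀ * U) = 1 := by
    have hVV : V * Vᵀ = 1 := mul_eq_one_comm.mp hV
    have hQQ : Q * Qᵀ = 1 := mul_eq_one_comm.mp hQ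
    calc (Vᵀ * Qᵀ * U)ᵀ * (Vᵀ * Qᵀ * U)
        = Uᵀ * (Q * ((V * Vᵀ) * Qᵀ) * U) := by
          simp [Matrix.transpose_mul, Matrix.mul_assoc]
      _ = 1 := by rw [hVV, Matrix.one_mul, hQQ, Matrix.one_mul, hU]
  refine Finset.sum_le_sum fun k _ => ?_
  calc (Vᵀ * Qᵀ * U) k k * s k ≤ 1 * s k :=
        mul_le_mul_of_nonneg_right (diag_le_one _ hA k) (hs k)
    _ = s k := one_mul _

end Alg1
namespace Alg1

lemma poly_psd {M d : ℕ} (n : ℕ) (x y : Fin M → Fin d → ℝ) :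
    0 ≤ ∑ i, ∑ j, (x i ⬝ᵥ x j) ^ n * (y i ⬝ᵥ y j) := by
  have key : ∀ i j : Fin M, (x i ⬝ᵥ x j) ^ n * (y i ⬝ᵥ y j)
      = ∑ p : Fin n → Fin d, ∑ l : Fin d,
          ((∏ r, x i (p r)) * y i l) * ((∏ r, x j (p r)) * y j l) := by
    intro i j
    rw [dot_eq, dot_eq, Fintype.sum_pow, Finset.sum_mul_sum]
    refine Finset.sum_congr rfl fun p _ => Finset.sum_congr rfl fun l _ => ?_
    rw [Finset.prod_mul_distrib]; ring
  have sq_form : ∑ i, ∑ j, (x i ⬝ᵥ x j) ^ n * (y i ⬝ᵥ y j)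
      = ∑ p : Fin n → Fin d, ∑ l : Fin d, (∑ i, (∏ r, x i (p r)) * y i l) ^ 2 := by
    simp_rw [key, sq, Finset.sum_mul_sum]
    calc ∑ i, ∑ j, ∑ p : Fin n → Fin d, ∑ l : Fin d,
            ((∏ r, x i (p r)) * y i l) * ((∏ r, x j (p r)) * y j l)
        = ∑ i, ∑ p : Fin n → Fin d, ∑ j, ∑ l : Fin d,
            ((∏ r, x i (p r)) * y i l) * ((∏ r, x j (p r)) * y j l) :=
          Finset.sum_congr rfl fun i _ => Finset.sum_comm
      _ = ∑ p : Fin n → Fin d, ∑ i, ∑ j, ∑ l : Fin d,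
            ((∏ r, x i (p r)) * y i l) * ((∏ r, x j (p r)) * y j l) := Finset.sum_comm
      _ = ∑ p : Fin n → Fin d, ∑ i, ∑ l, ∑ j,
            ((∏ r, x i (p r)) * y i l) * ((∏ r, x j (p r)) * y j l) :=
          Finset.sum_congr rfl fun p _ => Finset.sum_congr rfl fun i _ => Finset.sum_comm
      _ = ∑ p : Fin n → Fin d, ∑ l, ∑ i, ∑ j,
            ((∏ r, x i (p r)) * y i l) * ((∏ r, x j (p r)) * y j l) :=
          Finset.sum_congr rfl fun p _ => Finset.sum_comm
  rw [sq_form]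
  exact Finset.sum_nonneg fun p _ => Finset.sum_nonneg fun l _ => sq_nonneg _

lemma kernel_psd {M d : ℕ} (t : ℝ) (ht : 0 ≤ t) (x y : Fin M → Fin d → ℝ) :
    0 ≤ ∑ i, ∑ j, Real.exp (t * (x i ⬝ᵥ x j)) * (y i ⬝ᵥ y j) := by
  have hexp : ∀ z : ℝ, Real.exp z = ∑' n : ℕ, z ^ n / n.factorial := by
    intro z
    rw [Real.exp_eq_exp_ℝ, NormedSpace.exp_eq_tsum_div]
  have hf : ∀ (c yv : ℝ), Summable (fun n : ℕ => (t * c) ^ n / n.factorial * yv) :=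
    fun c yv => (Real.summable_pow_div_factorial (t * c)).mul_right yv
  have step1 : ∑ i, ∑ j, Real.exp (t * (x i ⬝ᵥ x j)) * (y i ⬝ᵥ y j)
      = ∑' n : ℕ, ∑ i, ∑ j, (t * (x i ⬝ᵥ x j)) ^ n / n.factorial * (y i ⬝ᵥ y j) := by
    have inner : ∀ i : Fin M, ∑ j, Real.exp (t * (x i ⬝ᵥ x j)) * (y i ⬝ᵥ y j)
        = ∑' n : ℕ, ∑ j, (t * (x i ⬝ᵥ x j)) ^ n / n.factorial * (y i ⬝ᵥ y j) := by
      intro i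
      rw [Summable.tsum_finsetSum (fun j _ => hf _ _)]
      refine Finset.sum_congr rfl fun j _ => ?_
      rw [hexp, ← tsum_mul_right]
    calc ∑ i, ∑ j, Real.exp (t * (x i ⬝ᵥ x j)) * (y i ⬝ᵥ y j)
        = ∑ i, ∑' n : ℕ, ∑ j, (t * (x i ⬝ᵥ x j)) ^ n / n.factorial * (y i ⬝ᵥ y j) :=
          Finset.sum_congr rfl fun i _ => inner i
      _ = ∑' n : ℕ, ∑ i, ∑ j, (t * (x i ⬝ᵥ x j)) ^ n / n.factorial * (y i ⬝ᵥ y j) :=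
          (Summable.tsum_finsetSum (fun i _ => summable_sum (fun j _ => hf _ _))).symm
  rw [step1]
  refine tsum_nonneg fun n => ?_
  have : ∑ i, ∑ j, (t * (x i ⬝ᵥ x j)) ^ n / n.factorial * (y i ⬝ᵥ y j)
      = t ^ n / n.factorial * ∑ i, ∑ j, (x i ⬝ᵥ x j) ^ n * (y i ⬝ᵥ y j) := by
    simp_rw [Finset.mul_sum]
    refine Finset.sum_congr rfl fun i _ => Finset.sum_congr rfl fun j _ => ?_
    rw [mul_pow]; ring
  rw [this]
  exact mul_nonneg (div_nonneg (pow_nonneg ht n) (Nat.cast_nonneg _)) (poly_psd n x y)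

end Alg1

namespace Alg1

lemma sqnorm_sub' {d : ℕ} (v w : Fin d → ℝ) :
    sqnorm (v - w) = sqnorm v + sqnorm w - 2 * (v ⬝ᵥ w) := by
  simp only [sqnorm, Pi.sub_apply, dot_eq, Finset.mul_sum, ← Finset.sum_add_distrib,
    ← Finset.sum_sub_distrib]
  exact Finset.sum_congr rfl fun k _ => by ring

lemma sqnorm_mulVec' {d : ℕ} {Q : Matrix (Fin d) (Fin d) ℝ} (h : Qᵀ * Q = 1) (v : Fin d → ℝ) :
    sqnorm (Q *ᵥ v) = sqnorm v := by
  rw [sqnorm, sqnorm, sqnorm_eq_dot, sqnorm_eq_dot, mulVec_dot_mulVec Q h]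

end Alg1
end

theorem algorithm1_ascent (M d : ℕ) (γ η : ℝ) (hγ : 0 < γ) (hη : 0 < η)
    (μ : Fin M → (Fin d → ℝ))
    (Rprev R : Fin M → Matrix (Fin d) (Fin d) ℝ)
    (hRprev : ∀ i, (Rprev i)ᵀ * Rprev i = 1)
    (U V : Fin M → Matrix (Fin d) (Fin d) ℝ) (s : Fin M → Fin d → ℝ)
    (hU : ∀ i, (U i)ᵀ * U i = 1) (hV : ∀ i, (V i)ᵀ * V i = 1)
    (hs : ∀ i k, 0 ≤ s i k)
    (hSVD : ∀ i, Hmat γ η μ Rprev i = U i * Matrix.diagonal (s i) * (V i)ᵀ)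
    (hR : ∀ i, R i = U i * (V i)ᵀ) :
    Lobj γ μ Rprev + 2 * γ * η * ∑ i, frobSq (R i - Rprev i) ≤ Lobj γ μ R := by
  classical
  set a : Fin M → Fin d → ℝ := fun i => (R i) *ᵥ (μ i) with ha_def
  set b : Fin M → Fin d → ℝ := fun i => (Rprev i) *ᵥ (μ i) with hb_def
  set u : Fin M → Fin d → ℝ := fun i => a i - b i with hu_def
  set c : Fin M → Fin M → ℝ := fun i j => wCoef γ μ i j * kCoef γ μ Rprev i j with hc_def
  -- orthogonality of the new iterates
  have hRorth : ∀ i, (R i)ᵀ * R i = 1 := by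
    intro i
    rw [hR i]
    have hVV : V i * (V i)ᵀ = 1 := mul_eq_one_comm.mp (hV i)
    calc (U i * (V i)ᵀ)ᵀ * (U i * (V i)ᵀ)
        = V i * ((U i)ᵀ * U i) * (V i)ᵀ := by
          simp [Matrix.transpose_mul, Matrix.mul_assoc]
      _ = 1 := by rw [hU i, Matrix.mul_one, hVV]
  have hsqa : ∀ i, sqnorm (a i) = sqnorm (μ i) := fun i => Alg1.sqnorm_mulVec' (hRorth i) (μ i)
  have hsqb : ∀ i, sqnorm (b i) = sqnorm (μ i) := fun i => Alg1.sqnorm_mulVec' (hRprev i) (μ i)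
  -- c in Gaussian form
  have hcb : ∀ i j, c i j = Real.exp (-γ * sqnorm (b i - b j)) := by
    intro i j
    rw [hc_def]
    simp only [wCoef, kCoef, ← Real.exp_add]
    congr 1
    rw [Alg1.sqnorm_sub', hsqb i, hsqb j]
    ring
  -- convexity step
  have hconv : ∀ i j, Real.exp (-γ * sqnorm (b i - b j))
      + 2 * γ * (c i j * ((a i ⬝ᵥ a j) - (b i ⬝ᵥ b j)))
      ≤ Real.exp (-γ * sqnorm (a i - a j)) := by
    intro i j
    have hx : -γ * sqnorm (a i - a j)
        = -γ * sqnorm (b i - b j) + 2 * γ * ((a i ⬝ᵥ a j) - (b i ⬝ᵥ b j)) := by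
      rw [Alg1.sqnorm_sub', Alg1.sqnorm_sub', hsqa i, hsqa j, hsqb i, hsqb j]
      ring
    rw [hx, hcb i j]
    calc Real.exp (-γ * sqnorm (b i - b j))
          + 2 * γ * (Real.exp (-γ * sqnorm (b i - b j)) * ((a i ⬝ᵥ a j) - (b i ⬝ᵥ b j)))
        = Real.exp (-γ * sqnorm (b i - b j))
            * (2 * γ * ((a i ⬝ᵥ a j) - (b i ⬝ᵥ b j)) + 1) := by ring
      _ ≤ Real.exp (-γ * sqnorm (b i - b j))
            * Real.exp (2 * γ * ((a i ⬝ᵥ a j) - (b i ⬝ᵥ b j))) :=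
          mul_le_mul_of_nonneg_left (Real.add_one_le_exp _) (Real.exp_pos _).le
      _ = _ := (Real.exp_add _ _).symm
  -- the linearized gain
  set S : ℝ := ∑ i, ∑ j, c i j * ((a i ⬝ᵥ a j) - (b i ⬝ᵥ b j)) with hS_def
  have hmain : Lobj γ μ Rprev + 2 * γ * S ≤ Lobj γ μ R := by
    rw [Lobj, Lobj, hS_def]
    simp only [Finset.mul_sum, ← Finset.sum_add_distrib]
    exact Finset.sum_le_sum fun i _ => Finset.sum_le_sum fun j _ => hconv i j
  -- decomposition of S
  have hdot : ∀ i j, (a i ⬝ᵥ a j) - (b i ⬝ᵥ b j)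
      = (u i ⬝ᵥ u j) + ((u i ⬝ᵥ b j) + (b i ⬝ᵥ u j)) := by
    intro i j
    simp only [hu_def, Alg1.dot_eq, Pi.sub_apply, ← Finset.sum_add_distrib,
      ← Finset.sum_sub_distrib]
    exact Finset.sum_congr rfl fun k _ => by ring
  have hcsymm : ∀ i j, c i j = c j i := by
    intro i j
    rw [hc_def]
    simp only [wCoef, kCoef]
    rw [add_comm (sqnorm (μ i)), dotProduct_comm]
  set K : ℝ := ∑ i, ∑ j, c i j * (u i ⬝ᵥ u j) with hK_def
  set T : ℝ := ∑ i, ∑ j, c i j * (u i ⬝ᵥ b j) with hT_def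
  have hSdecomp : S = K + 2 * T := by
    have h2 : (∑ i, ∑ j, c i j * (b i ⬝ᵥ u j)) = T := by
      rw [hT_def, Finset.sum_comm]
      refine Finset.sum_congr rfl fun j _ => Finset.sum_congr rfl fun i _ => ?_
      rw [hcsymm i j, dotProduct_comm]
    rw [hS_def, hK_def]
    simp only [hdot, mul_add, Finset.sum_add_distrib]
    rw [h2]; ring
  -- K is nonnegative (Gaussian kernel is PSD)
  have hKnonneg : 0 ≤ K := by
    have hker := Alg1.kernel_psd (2 * γ) (by positivity) b
      (fun i => fun l => Real.exp (-γ * sqnorm (μ i)) * u i l)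
    rw [hK_def]
    calc (0:ℝ) ≤ _ := hker
      _ = ∑ i, ∑ j, c i j * (u i ⬝ᵥ u j) := by
        refine Finset.sum_congr rfl fun i _ => Finset.sum_congr rfl fun j _ => ?_
        rw [hc_def]
        simp only [wCoef, kCoef, Alg1.dot_eq]
        rw [Finset.mul_sum, Finset.mul_sum]
        rw [Finset.mul_sum]
        refine Finset.sum_congr rfl fun l _ => ?_
        have h2 : Real.exp (-γ * (sqnorm (μ i) + sqnorm (μ j)))
            = Real.exp (-γ * sqnorm (μ i)) * Real.exp (-γ * sqnorm (μ j)) := by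
          rw [← Real.exp_add]
          congr 1
          ring
        rw [h2]
        ring
  -- per-index Procrustes bound
  have hT_ge : η / 2 * ∑ i, frobSq (R i - Rprev i) ≤ T := by
    rw [hT_def, Finset.mul_sum]
    refine Finset.sum_le_sum fun i _ => ?_
    have hip : ∀ Q : Matrix (Fin d) (Fin d) ℝ,
        Alg1.ip Q (Hmat γ η μ Rprev i)
          = (∑ j, c i j * ((Q *ᵥ (μ i)) ⬝ᵥ b j)) + η * Alg1.ip Q (Rprev i) := by
      intro Q
      rw [Hmat, Alg1.ip_add, Alg1.ip_sum, Alg1.ip_smul]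
      congr 1
      exact Finset.sum_congr rfl fun j _ => by
        rw [Alg1.ip_smul, Alg1.ip_vecMulVec]
    have hopt : Alg1.ip (R i) (Hmat γ η μ Rprev i) = ∑ k, s i k := by
      rw [hSVD i, hR i]
      exact Alg1.ip_svd_opt (U i) (V i) (s i) (hU i) (hV i)
    have hle : Alg1.ip (Rprev i) (Hmat γ η μ Rprev i) ≤ ∑ k, s i k := by
      rw [hSVD i]
      exact Alg1.ip_svd_le (Rprev i) (U i) (V i) (s i) (hRprev i) (hU i) (hV i) (hs i)
    have hfr : frobSq (R i - Rprev i)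
        = (d : ℝ) - 2 * Alg1.ip (R i) (Rprev i) + d := by
      have : frobSq (R i - Rprev i)
          = Alg1.ip (R i) (R i) - 2 * Alg1.ip (R i) (Rprev i) + Alg1.ip (Rprev i) (Rprev i) := by
        rw [frobSq, ← Alg1.frobSq_eq]
        simp [Matrix.sub_apply]
      rw [this, Alg1.ip_self_orth _ (hRorth i), Alg1.ip_self_orth _ (hRprev i)]
    have hsplit : (∑ j, c i j * (u i ⬝ᵥ b j))
        = (∑ j, c i j * (a i ⬝ᵥ b j)) - ∑ j, c i j * (b i ⬝ᵥ b j) := by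
      rw [← Finset.sum_sub_distrib]
      refine Finset.sum_congr rfl fun j _ => ?_
      rw [hu_def]
      simp only [sub_dotProduct]
      ring
    have hipa := hip (R i)
    have hipb := hip (Rprev i)
    rw [hopt] at hipa
    have haa : (∑ j, c i j * (a i ⬝ᵥ b j)) = (∑ k, s i k) - η * Alg1.ip (R i) (Rprev i) := by
      rw [ha_def] at *
      linarith [hipa]
    have hbb : (∑ j, c i j * (b i ⬝ᵥ b j)) ≤ (∑ k, s i k) - η * (d : ℝ) := by
      have : Alg1.ip (Rprev i) (Rprev i) = (d : ℝ) := Alg1.ip_self_orth _ (hRprev i)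
      rw [hipb, this] at hle
      linarith
    rw [hsplit, haa, hfr]
    linarith
  -- put everything together
  have hfrnn : 0 ≤ ∑ i, frobSq (R i - Rprev i) :=
    Finset.sum_nonneg fun i _ =>
      Finset.sum_nonneg fun p _ => Finset.sum_nonneg fun q _ => sq_nonneg _
  have hSge : η * ∑ i, frobSq (R i - Rprev i) ≤ S := by
    rw [hSdecomp]
    have : η * ∑ i, frobSq (R i - Rprev i) = 2 * (η / 2 * ∑ i, frobSq (R i - Rprev i)) := by
      ring
    linarith [hT_ge, hKnonneg]
  have : 2 * γ * η * ∑ i, frobSq (R i - Rprev i) ≤ 2 * γ * S := by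
    have h1 : 2 * γ * (η * ∑ i, frobSq (R i - Rprev i)) ≤ 2 * γ * S :=
      mul_le_mul_of_nonneg_left hSge (by positivity)
    linarith [h1]
  linarith [hmain, this]
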